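/- Let q : ℝ → ℝ be continuous on [0,1] and α, β, γ ∈ ℝ with sin(β − γ) ≠ 0. For i ∈ {1,2} and n ∈ ℕ, let λ_{i,n} ∈ ℝ, with n ↦ λ_{1,n} and n ↦ λ_{2,n} injective. For each (i,n), let s_{i,n} and c_{i,n} be twice continuously differentiable solutions of −u'' + q u = λ_{i,n} u on [0,1] with terminal values s_{i,n}(1) = sin β, s_{i,n}'(1) = −cos β, c_{i,n}(1) = sin γ, c_{i,n}'(1) = −cos γ. Suppose s_{1,n}(0)cos α + s_{1,n}'(0)sin α = 0 and c_{2,n}(0)cos α + c_{2,n}'(0)sin α = 0 for all n, and set g_{1,n} = s_{1,n}/(∫₀¹ s_{1,n}²)^{1/2} and g_{2,n} = c_{2,n}/(∫₀¹ c_{2,n}²)^{1/2}. Then for all i, j ∈ {1,2} and n, m ∈ ℕ: Γ(c_{i,n} s_{i,n}, g_{j,m}²) = (−1)^i sin(γ − β) if (i,n) = (j,m), and Γ(c_{i,n} s_{i,n}, g_{j,m}²) = 0 otherwise. -/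

import Mathlib

open Set intervalIntegral


private lemma det_zero {a b cc d co si : ℝ} (hv : co^2 + si^2 = 1)
    (h1 : a * co + b * si = 0) (h2 : cc * co + d * si = 0) :
    a * d - b * cc = 0 := by
  have key : (a*d - b*cc) * (co^2 + si^2)
      = d*co*(a*co+b*si) - b*co*(cc*co+d*si) + a*si*(cc*co+d*si) - cc*si*(a*co+b*si) := by
    ring
  rw [h1, h2, hv] at key
  linarith [key]

private lemma wronskian_const
    (q : ℝ → ℝ) (lamv : ℝ) (f f' f'' k k' k'' : ℝ → ℝ)
    (hf : ∀ x ∈ Set.Icc (0:ℝ) 1, HasDerivAt f (f' x) x ∧ HasDerivAt f' (f'' x) x)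
    (hk : ∀ x ∈ Set.Icc (0:ℝ) 1, HasDerivAt k (k' x) x ∧ HasDerivAt k' (k'' x) x)
    (hfe : ∀ x ∈ Set.Icc (0:ℝ) 1, -f'' x + q x * f x = lamv * f x)
    (hke : ∀ x ∈ Set.Icc (0:ℝ) 1, -k'' x + q x * k x = lamv * k x) :
    ∀ x ∈ Set.Icc (0:ℝ) 1, f x * k' x - f' x * k x = f 1 * k' 1 - f' 1 * k 1 := by
  set P : ℝ → ℝ := fun x => f x * k' x - f' x * k x with hP
  have hder : ∀ x ∈ Set.Icc (0:ℝ) 1, HasDerivAt P 0 x := by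
    intro x hx
    obtain ⟨hfx, hf'x⟩ := hf x hx
    obtain ⟨hkx, hk'x⟩ := hk x hx
    have H := (hfx.mul hk'x).sub (hf'x.mul hkx)
    refine H.congr_deriv ?_
    have e1 : f'' x = q x * f x - lamv * f x := by have := hfe x hx; linarith
    have e2 : k'' x = q x * k x - lamv * k x := by have := hke x hx; linarith
    rw [e1, e2]; ring
  have hcont : ContinuousOn P (Set.Icc (0:ℝ) 1) :=
    fun x hx => (hder x hx).continuousAt.continuousWithinAt
  have hconst : ∀ x ∈ Set.Icc (0:ℝ) 1, P x = P 0 := by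
    intro x hx
    exact constant_of_has_deriv_right_zero hcont
      (fun y hy => (hder y (Set.mem_Icc_of_Ico hy)).hasDerivWithinAt) x hx
  intro x hx
  have h1 : P 1 = P 0 := hconst 1 (by norm_num)
  have h2 : P x = P 0 := hconst x hx
  show P x = P 1
  rw [h1, h2]

private lemma integral_sq_pos (f f' : ℝ → ℝ)
    (hf : ∀ x ∈ Set.Icc (0:ℝ) 1, HasDerivAt f (f' x) x)
    (hne : f 1 ≠ 0 ∨ f' 1 ≠ 0) :
    0 < ∫ x in (0:ℝ)..1, (f x)^2 := by
  have h1 : (1:ℝ) ∈ Set.Icc (0:ℝ) 1 := by norm_num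
  have hd1 := hf 1 h1
  have hev : ∀ᶠ x in nhdsWithin 1 (Set.Iio 1), f x ≠ 0 := by
    by_cases h0 : f 1 = 0
    · rcases hne with h | h
      · exact absurd h0 h
      · have h2 := hd1.eventually_ne (c := f 1) h
        have hmono : nhdsWithin (1:ℝ) (Set.Iio 1) ≤ nhdsWithin 1 {y | y ≠ 1} :=
          nhdsWithin_mono 1 (fun x hx => ne_of_lt hx)
        filter_upwards [hmono h2] with x hx
        rwa [h0] at hx
    · exact eventually_nhdsWithin_of_eventually_nhds (hd1.continuousAt.eventually_ne h0)
  obtain ⟨a, ha, hsub⟩ := mem_nhdsLT_iff_exists_Ioo_subset.1 hev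
  set b := max a 0 with hb
  have hb0 : (0:ℝ) ≤ b := le_max_right _ _
  have hb1 : b < 1 := max_lt ha zero_lt_one
  have hfc0 : ContinuousOn f (Set.Icc (0:ℝ) 1) :=
    fun x hx => (hf x hx).continuousAt.continuousWithinAt
  have hfc : ContinuousOn (fun x => (f x)^2) (Set.Icc (0:ℝ) 1) := hfc0.pow 2
  have int1 : IntervalIntegrable (fun x => (f x)^2) MeasureTheory.volume 0 b :=
    (hfc.mono (by rw [Set.uIcc_of_le hb0]; exact Set.Icc_subset_Icc le_rfl hb1.le)).intervalIntegrable
  have int2 : IntervalIntegrable (fun x => (f x)^2) MeasureTheory.volume b 1 :=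
    (hfc.mono (by rw [Set.uIcc_of_le hb1.le]; exact Set.Icc_subset_Icc hb0 le_rfl)).intervalIntegrable
  rw [← intervalIntegral.integral_add_adjacent_intervals int1 int2]
  have hA : 0 ≤ ∫ x in (0:ℝ)..b, (f x)^2 :=
    intervalIntegral.integral_nonneg hb0 (fun x _ => sq_nonneg _)
  have hB : 0 < ∫ x in b..1, (f x)^2 := by
    apply intervalIntegral.intervalIntegral_pos_of_pos_on int2 _ hb1
    intro x hx
    have hx' : x ∈ Set.Ioo a 1 := ⟨lt_of_le_of_lt (le_max_left a 0) hx.1, hx.2⟩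
    exact lt_of_le_of_ne (sq_nonneg _) (Ne.symm (pow_ne_zero _ (hsub hx')))
  linarith



private lemma off (q : ℝ → ℝ) (lamv mu N : ℝ) (hne : lamv ≠ mu)
    (c c' c'' s s' s'' b b' b'' : ℝ → ℝ)
    (hc : ∀ x ∈ Set.Icc (0:ℝ) 1, HasDerivAt c (c' x) x ∧ HasDerivAt c' (c'' x) x)
    (hs : ∀ x ∈ Set.Icc (0:ℝ) 1, HasDerivAt s (s' x) x ∧ HasDerivAt s' (s'' x) x)
    (hb : ∀ x ∈ Set.Icc (0:ℝ) 1, HasDerivAt b (b' x) x ∧ HasDerivAt b' (b'' x) x)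
    (hceq : ∀ x ∈ Set.Icc (0:ℝ) 1, -c'' x + q x * c x = lamv * c x)
    (hseq : ∀ x ∈ Set.Icc (0:ℝ) 1, -s'' x + q x * s x = lamv * s x)
    (hbeq : ∀ x ∈ Set.Icc (0:ℝ) 1, -b'' x + q x * b x = mu * b x)
    (H1 : (c 1 * b' 1 - c' 1 * b 1) * (s 1 * b' 1 - s' 1 * b 1) = 0)
    (H0 : (c 0 * b' 0 - c' 0 * b 0) * (s 0 * b' 0 - s' 0 * b 0) = 0) :
    (∫ x in (0:ℝ)..1, (c x * s x * (2 * (b x / N) * (b' x / N))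
        - (c' x * s x + c x * s' x) * (b x / N)^2)) = 0 := by
  set W : ℝ → ℝ := fun x => c x * s x * (2 * (b x / N) * (b' x / N))
        - (c' x * s x + c x * s' x) * (b x / N)^2 with hWdef
  set P : ℝ → ℝ := fun x => (c x * (b' x / N) - c' x * (b x / N))
        * (s x * (b' x / N) - s' x * (b x / N)) with hPdef
  have hP : ∀ x ∈ Set.Icc (0:ℝ) 1, HasDerivAt P ((lamv - mu) * W x) x := by
    intro x hx
    obtain ⟨hcx, hc'x⟩ := hc x hx
    obtain ⟨hsx, hs'x⟩ := hs x hx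
    obtain ⟨hbx, hb'x⟩ := hb x hx
    have hux : HasDerivAt (fun y => b y / N) (b' x / N) x := hbx.div_const N
    have hu'x : HasDerivAt (fun y => b' y / N) (b'' x / N) x := hb'x.div_const N
    have hA := (hcx.mul hu'x).sub (hc'x.mul hux)
    have hB := (hsx.mul hu'x).sub (hs'x.mul hux)
    have H := hA.mul hB
    refine H.congr_deriv ?_
    have ec : c'' x = q x * c x - lamv * c x := by have := hceq x hx; linarith
    have es : s'' x = q x * s x - lamv * s x := by have := hseq x hx; linarith
    have eb : b'' x = q x * b x - mu * b x := by have := hbeq x hx; linarith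
    simp only [hWdef, Pi.mul_apply, Pi.sub_apply]
    rw [ec, es, eb]; ring
  have hcc : ContinuousOn c (Set.Icc (0:ℝ) 1) := fun x hx => (hc x hx).1.continuousAt.continuousWithinAt
  have hcc' : ContinuousOn c' (Set.Icc (0:ℝ) 1) := fun x hx => (hc x hx).2.continuousAt.continuousWithinAt
  have hss : ContinuousOn s (Set.Icc (0:ℝ) 1) := fun x hx => (hs x hx).1.continuousAt.continuousWithinAt
  have hss' : ContinuousOn s' (Set.Icc (0:ℝ) 1) := fun x hx => (hs x hx).2.continuousAt.continuousWithinAt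
  have hbb : ContinuousOn b (Set.Icc (0:ℝ) 1) := fun x hx => (hb x hx).1.continuousAt.continuousWithinAt
  have hbb' : ContinuousOn b' (Set.Icc (0:ℝ) 1) := fun x hx => (hb x hx).2.continuousAt.continuousWithinAt
  have hWc : ContinuousOn (fun x => (lamv - mu) * W x) (Set.Icc (0:ℝ) 1) := by
    simp only [hWdef]
    fun_prop
  have hint : IntervalIntegrable (fun x => (lamv - mu) * W x) MeasureTheory.volume 0 1 :=
    (hWc.mono (by rw [Set.uIcc_of_le zero_le_one])).intervalIntegrable
  have hftc : (∫ x in (0:ℝ)..1, (lamv - mu) * W x) = P 1 - P 0 :=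
    intervalIntegral.integral_eq_sub_of_hasDerivAt
      (fun x hx => hP x (by rwa [Set.uIcc_of_le zero_le_one] at hx)) hint
  have hP1 : P 1 = 0 := by
    have e : P 1 = ((c 1 * b' 1 - c' 1 * b 1) * (s 1 * b' 1 - s' 1 * b 1)) / (N * N) := by
      simp only [hPdef]; ring
    rw [e, H1, zero_div]
  have hP0 : P 0 = 0 := by
    have e : P 0 = ((c 0 * b' 0 - c' 0 * b 0) * (s 0 * b' 0 - s' 0 * b 0)) / (N * N) := by
      simp only [hPdef]; ring
    rw [e, H0, zero_div]
  rw [intervalIntegral.integral_const_mul, hP1, hP0, sub_zero] at hftc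
  have := mul_eq_zero.1 hftc
  rcases this with h | h
  · exact absurd (sub_eq_zero.1 h) hne
  · exact h

private lemma diag1 (q : ℝ → ℝ) (lamv : ℝ) (c c' c'' s s' s'' : ℝ → ℝ)
    (hc : ∀ x ∈ Set.Icc (0:ℝ) 1, HasDerivAt c (c' x) x ∧ HasDerivAt c' (c'' x) x)
    (hs : ∀ x ∈ Set.Icc (0:ℝ) 1, HasDerivAt s (s' x) x ∧ HasDerivAt s' (s'' x) x)
    (hceq : ∀ x ∈ Set.Icc (0:ℝ) 1, -c'' x + q x * c x = lamv * c x)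
    (hseq : ∀ x ∈ Set.Icc (0:ℝ) 1, -s'' x + q x * s x = lamv * s x)
    (hT : 0 < ∫ x in (0:ℝ)..1, (s x)^2) :
    (∫ x in (0:ℝ)..1, (c x * s x * (2 * (s x / Real.sqrt (∫ t in (0:ℝ)..1, (s t)^2))
          * (s' x / Real.sqrt (∫ t in (0:ℝ)..1, (s t)^2)))
        - (c' x * s x + c x * s' x) * (s x / Real.sqrt (∫ t in (0:ℝ)..1, (s t)^2))^2))
      = c 1 * s' 1 - c' 1 * s 1 := by
  set T : ℝ := ∫ t in (0:ℝ)..1, (s t)^2 with hTdef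
  set N : ℝ := Real.sqrt T with hNdef
  have hN2 : N * N = T := Real.mul_self_sqrt hT.le
  have hN : N ≠ 0 := by
    intro h; rw [h, mul_zero] at hN2; exact absurd hN2.symm (ne_of_gt hT)
  set K : ℝ := c 1 * s' 1 - c' 1 * s 1 with hKdef
  have hW := wronskian_const q lamv c c' c'' s s' s'' hc hs hceq hseq
  have heq : Set.EqOn
      (fun x => (c x * s x * (2 * (s x / N) * (s' x / N))
        - (c' x * s x + c x * s' x) * (s x / N)^2))
      (fun x => (K / T) * (s x)^2) (Set.uIcc (0:ℝ) 1) := by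
    intro x hx
    rw [Set.uIcc_of_le zero_le_one] at hx
    have h1 : c x * s' x - c' x * s x = K := hW x hx
    simp only
    rw [← h1, ← hN2]
    field_simp
    ring
  rw [intervalIntegral.integral_congr heq, intervalIntegral.integral_const_mul]
  rw [← hTdef, div_mul_cancel₀ _ (ne_of_gt hT)]

private lemma diag2 (q : ℝ → ℝ) (lamv : ℝ) (c c' c'' s s' s'' : ℝ → ℝ)
    (hc : ∀ x ∈ Set.Icc (0:ℝ) 1, HasDerivAt c (c' x) x ∧ HasDerivAt c' (c'' x) x)
    (hs : ∀ x ∈ Set.Icc (0:ℝ) 1, HasDerivAt s (s' x) x ∧ HasDerivAt s' (s'' x) x)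
    (hceq : ∀ x ∈ Set.Icc (0:ℝ) 1, -c'' x + q x * c x = lamv * c x)
    (hseq : ∀ x ∈ Set.Icc (0:ℝ) 1, -s'' x + q x * s x = lamv * s x)
    (hT : 0 < ∫ x in (0:ℝ)..1, (c x)^2) :
    (∫ x in (0:ℝ)..1, (c x * s x * (2 * (c x / Real.sqrt (∫ t in (0:ℝ)..1, (c t)^2))
          * (c' x / Real.sqrt (∫ t in (0:ℝ)..1, (c t)^2)))
        - (c' x * s x + c x * s' x) * (c x / Real.sqrt (∫ t in (0:ℝ)..1, (c t)^2))^2))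
      = c' 1 * s 1 - c 1 * s' 1 := by
  set T : ℝ := ∫ t in (0:ℝ)..1, (c t)^2 with hTdef
  set N : ℝ := Real.sqrt T with hNdef
  have hN2 : N * N = T := Real.mul_self_sqrt hT.le
  have hN : N ≠ 0 := by
    intro h; rw [h, mul_zero] at hN2; exact absurd hN2.symm (ne_of_gt hT)
  set K : ℝ := c' 1 * s 1 - c 1 * s' 1 with hKdef
  have hW := wronskian_const q lamv c c' c'' s s' s'' hc hs hceq hseq
  have heq : Set.EqOn
      (fun x => (c x * s x * (2 * (c x / N) * (c' x / N))
        - (c' x * s x + c x * s' x) * (c x / N)^2))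
      (fun x => (K / T) * (c x)^2) (Set.uIcc (0:ℝ) 1) := by
    intro x hx
    rw [Set.uIcc_of_le zero_le_one] at hx
    have h1 : c x * s' x - c' x * s x = c 1 * s' 1 - c' 1 * s 1 := hW x hx
    have h1' : c' x * s x - c x * s' x = K := by simp only [hKdef]; linarith
    simp only
    rw [← h1', ← hN2]
    field_simp
    ring
  rw [intervalIntegral.integral_congr heq, intervalIntegral.integral_const_mul]
  rw [← hTdef, div_mul_cancel₀ _ (ne_of_gt hT)]


/-- Central lemma: with `sin(β − γ) ≠ 0` and the solutions `s_{i,n}`, `c_{i,n}` of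
`−u'' + q u = λ_{i,n} u` with terminal values determined by `β` resp. `γ`, and the
normalized eigenfunctions `g_{1,n} = s_{1,n}/‖s_{1,n}‖₂`, `g_{2,n} = c_{2,n}/‖c_{2,n}‖₂`,
we have `Γ(c_{i,n} s_{i,n}, g_{j,m}²) = (−1)^i sin(γ − β) δ_{n,m} δ_{i,j}`. -/
theorem gamma_cs_gsq_eq_delta
    (q : ℝ → ℝ) (hq : ContinuousOn q (Set.Icc (0:ℝ) 1))
    (α β γ : ℝ) (hβγ : Real.sin (β - γ) ≠ 0)
    (lam : ℕ → ℕ → ℝ)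
    (hinj1 : Function.Injective (lam 1)) (hinj2 : Function.Injective (lam 2))
    (s s' s'' c c' c'' : ℕ → ℕ → ℝ → ℝ)
    (hs : ∀ i ∈ ({1, 2} : Set ℕ), ∀ n : ℕ, ∀ x ∈ Set.Icc (0:ℝ) 1,
      HasDerivAt (s i n) (s' i n x) x ∧ HasDerivAt (s' i n) (s'' i n x) x)
    (hs'' : ∀ i ∈ ({1, 2} : Set ℕ), ∀ n : ℕ, ContinuousOn (s'' i n) (Set.Icc (0:ℝ) 1))
    (hc : ∀ i ∈ ({1, 2} : Set ℕ), ∀ n : ℕ, ∀ x ∈ Set.Icc (0:ℝ) 1,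
      HasDerivAt (c i n) (c' i n x) x ∧ HasDerivAt (c' i n) (c'' i n x) x)
    (hc'' : ∀ i ∈ ({1, 2} : Set ℕ), ∀ n : ℕ, ContinuousOn (c'' i n) (Set.Icc (0:ℝ) 1))
    (hseq : ∀ i ∈ ({1, 2} : Set ℕ), ∀ n : ℕ, ∀ x ∈ Set.Icc (0:ℝ) 1,
      -s'' i n x + q x * s i n x = lam i n * s i n x)
    (hceq : ∀ i ∈ ({1, 2} : Set ℕ), ∀ n : ℕ, ∀ x ∈ Set.Icc (0:ℝ) 1,
      -c'' i n x + q x * c i n x = lam i n * c i n x)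
    (hsval : ∀ i ∈ ({1, 2} : Set ℕ), ∀ n : ℕ,
      s i n 1 = Real.sin β ∧ s' i n 1 = -Real.cos β)
    (hcval : ∀ i ∈ ({1, 2} : Set ℕ), ∀ n : ℕ,
      c i n 1 = Real.sin γ ∧ c' i n 1 = -Real.cos γ)
    (hsbc : ∀ n : ℕ, s 1 n 0 * Real.cos α + s' 1 n 0 * Real.sin α = 0)
    (hcbc : ∀ n : ℕ, c 2 n 0 * Real.cos α + c' 2 n 0 * Real.sin α = 0)
    (g g' : ℕ → ℕ → ℝ → ℝ)
    (hg1 : ∀ n : ℕ, ∀ x : ℝ,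
      g 1 n x = s 1 n x / Real.sqrt (∫ t in (0:ℝ)..1, (s 1 n t)^2) ∧
      g' 1 n x = s' 1 n x / Real.sqrt (∫ t in (0:ℝ)..1, (s 1 n t)^2))
    (hg2 : ∀ n : ℕ, ∀ x : ℝ,
      g 2 n x = c 2 n x / Real.sqrt (∫ t in (0:ℝ)..1, (c 2 n t)^2) ∧
      g' 2 n x = c' 2 n x / Real.sqrt (∫ t in (0:ℝ)..1, (c 2 n t)^2)) :
    ∀ i ∈ ({1, 2} : Set ℕ), ∀ j ∈ ({1, 2} : Set ℕ), ∀ n m : ℕ,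
      (∫ x in (0:ℝ)..1,
          ((c i n x * s i n x) * (2 * g j m x * g' j m x)
            - (c' i n x * s i n x + c i n x * s' i n x) * (g j m x)^2)) =
        if i = j ∧ n = m then (-1 : ℝ)^i * Real.sin (γ - β) else 0 := by
  have h1m : (1:ℕ) ∈ ({1, 2} : Set ℕ) := by norm_num
  have h2m : (2:ℕ) ∈ ({1, 2} : Set ℕ) := by norm_num
  have hcossin : Real.cos α ^ 2 + Real.sin α ^ 2 = 1 := Real.cos_sq_add_sin_sq α
  have hsc : Real.sin β ^ 2 + (-Real.cos β) ^ 2 = 1 := by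
    have := Real.sin_sq_add_cos_sq β; nlinarith
  have hsc2 : Real.sin γ ^ 2 + (-Real.cos γ) ^ 2 = 1 := by
    have := Real.sin_sq_add_cos_sq γ; nlinarith
  -- nontriviality of terminal data
  have hsne : ∀ n : ℕ, s 1 n 1 ≠ 0 ∨ s' 1 n 1 ≠ 0 := by
    intro n
    by_cases h : Real.sin β = 0
    · right; rw [(hsval 1 h1m n).2]; intro h2; rw [h] at hsc; nlinarith
    · left; rw [(hsval 1 h1m n).1]; exact h
  have hcne : ∀ n : ℕ, c 2 n 1 ≠ 0 ∨ c' 2 n 1 ≠ 0 := by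
    intro n
    by_cases h : Real.sin γ = 0
    · right; rw [(hcval 2 h2m n).2]; intro h2; rw [h] at hsc2; nlinarith
    · left; rw [(hcval 2 h2m n).1]; exact h
  have hγβ : Real.sin (γ - β) = -Real.sin (β - γ) := by
    rw [← Real.sin_neg]; ring_nf
  intro i hi j hj n m
  simp only [Set.mem_insert_iff, Set.mem_singleton_iff] at hi hj
  rcases hi with rfl | rfl <;> rcases hj with rfl | rfl
  · -- i = 1, j = 1
    have hgx : ∀ x, g 1 m x = s 1 m x / Real.sqrt (∫ t in (0:ℝ)..1, (s 1 m t)^2) :=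
      fun x => (hg1 m x).1
    have hgx' : ∀ x, g' 1 m x = s' 1 m x / Real.sqrt (∫ t in (0:ℝ)..1, (s 1 m t)^2) :=
      fun x => (hg1 m x).2
    simp only [hgx, hgx']
    by_cases hnm : n = m
    · subst hnm
      rw [if_pos (⟨trivial, rfl⟩ : True ∧ n = n)]
      have hpos : 0 < ∫ x in (0:ℝ)..1, (s 1 n x)^2 :=
        integral_sq_pos _ _ (fun x hx => (hs 1 h1m n x hx).1) (hsne n)
      rw [diag1 q (lam 1 n) (c 1 n) (c' 1 n) (c'' 1 n) (s 1 n) (s' 1 n) (s'' 1 n)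
        (hc 1 h1m n) (hs 1 h1m n) (hceq 1 h1m n) (hseq 1 h1m n) hpos]
      rw [(hsval 1 h1m n).1, (hsval 1 h1m n).2, (hcval 1 h1m n).1, (hcval 1 h1m n).2,
        Real.sin_sub]
      ring
    · rw [if_neg (fun h => hnm h.2)]
      have hlam : lam 1 n ≠ lam 1 m := fun h => hnm (hinj1 h)
      apply off q (lam 1 n) (lam 1 m) _ hlam (c 1 n) (c' 1 n) (c'' 1 n)
        (s 1 n) (s' 1 n) (s'' 1 n) (s 1 m) (s' 1 m) (s'' 1 m)
        (hc 1 h1m n) (hs 1 h1m n) (hs 1 h1m m)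
        (hceq 1 h1m n) (hseq 1 h1m n) (hseq 1 h1m m)
      · apply mul_eq_zero.2 (Or.inr _)
        rw [(hsval 1 h1m n).1, (hsval 1 h1m n).2, (hsval 1 h1m m).1, (hsval 1 h1m m).2]
        ring
      · exact mul_eq_zero.2 (Or.inr (det_zero hcossin (hsbc n) (hsbc m)))
  · -- i = 1, j = 2
    rw [if_neg (fun h => by exact absurd h.1 (by norm_num))]
    have hgx : ∀ x, g 2 m x = c 2 m x / Real.sqrt (∫ t in (0:ℝ)..1, (c 2 m t)^2) :=
      fun x => (hg2 m x).1
    have hgx' : ∀ x, g' 2 m x = c' 2 m x / Real.sqrt (∫ t in (0:ℝ)..1, (c 2 m t)^2) :=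
      fun x => (hg2 m x).2
    simp only [hgx, hgx']
    by_cases hlam : lam 1 n = lam 2 m
    · exfalso
      have hw := wronskian_const q (lam 1 n) (s 1 n) (s' 1 n) (s'' 1 n)
        (c 2 m) (c' 2 m) (c'' 2 m) (hs 1 h1m n) (hc 2 h2m m) (hseq 1 h1m n)
        (fun x hx => by rw [hlam]; exact hceq 2 h2m m x hx)
      have h0 := hw 0 (by norm_num)
      have hz : s 1 n 0 * c' 2 m 0 - s' 1 n 0 * c 2 m 0 = 0 :=
        det_zero hcossin (hsbc n) (hcbc m)
      rw [hz, (hsval 1 h1m n).1, (hsval 1 h1m n).2, (hcval 2 h2m m).1, (hcval 2 h2m m).2] at h0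
      apply hβγ
      rw [Real.sin_sub]
      linarith
    · apply off q (lam 1 n) (lam 2 m) _ hlam (c 1 n) (c' 1 n) (c'' 1 n)
        (s 1 n) (s' 1 n) (s'' 1 n) (c 2 m) (c' 2 m) (c'' 2 m)
        (hc 1 h1m n) (hs 1 h1m n) (hc 2 h2m m)
        (hceq 1 h1m n) (hseq 1 h1m n) (hceq 2 h2m m)
      · apply mul_eq_zero.2 (Or.inl _)
        rw [(hcval 1 h1m n).1, (hcval 1 h1m n).2, (hcval 2 h2m m).1, (hcval 2 h2m m).2]
        ring
      · exact mul_eq_zero.2 (Or.inr (det_zero hcossin (hsbc n) (hcbc m)))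
  · -- i = 2, j = 1
    rw [if_neg (fun h => by exact absurd h.1 (by norm_num))]
    have hgx : ∀ x, g 1 m x = s 1 m x / Real.sqrt (∫ t in (0:ℝ)..1, (s 1 m t)^2) :=
      fun x => (hg1 m x).1
    have hgx' : ∀ x, g' 1 m x = s' 1 m x / Real.sqrt (∫ t in (0:ℝ)..1, (s 1 m t)^2) :=
      fun x => (hg1 m x).2
    simp only [hgx, hgx']
    by_cases hlam : lam 2 n = lam 1 m
    · exfalso
      have hw := wronskian_const q (lam 1 m) (s 1 m) (s' 1 m) (s'' 1 m)
        (c 2 n) (c' 2 n) (c'' 2 n) (hs 1 h1m m) (hc 2 h2m n) (hseq 1 h1m m)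
        (fun x hx => by rw [← hlam]; exact hceq 2 h2m n x hx)
      have h0 := hw 0 (by norm_num)
      have hz : s 1 m 0 * c' 2 n 0 - s' 1 m 0 * c 2 n 0 = 0 :=
        det_zero hcossin (hsbc m) (hcbc n)
      rw [hz, (hsval 1 h1m m).1, (hsval 1 h1m m).2, (hcval 2 h2m n).1, (hcval 2 h2m n).2] at h0
      apply hβγ
      rw [Real.sin_sub]
      linarith
    · apply off q (lam 2 n) (lam 1 m) _ hlam (c 2 n) (c' 2 n) (c'' 2 n)
        (s 2 n) (s' 2 n) (s'' 2 n) (s 1 m) (s' 1 m) (s'' 1 m)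
        (hc 2 h2m n) (hs 2 h2m n) (hs 1 h1m m)
        (hceq 2 h2m n) (hseq 2 h2m n) (hseq 1 h1m m)
      · apply mul_eq_zero.2 (Or.inr _)
        rw [(hsval 2 h2m n).1, (hsval 2 h2m n).2, (hsval 1 h1m m).1, (hsval 1 h1m m).2]
        ring
      · exact mul_eq_zero.2 (Or.inl (det_zero hcossin (hcbc n) (hsbc m)))
  · -- i = 2, j = 2
    have hgx : ∀ x, g 2 m x = c 2 m x / Real.sqrt (∫ t in (0:ℝ)..1, (c 2 m t)^2) :=
      fun x => (hg2 m x).1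
    have hgx' : ∀ x, g' 2 m x = c' 2 m x / Real.sqrt (∫ t in (0:ℝ)..1, (c 2 m t)^2) :=
      fun x => (hg2 m x).2
    simp only [hgx, hgx']
    by_cases hnm : n = m
    · subst hnm
      rw [if_pos (⟨trivial, rfl⟩ : True ∧ n = n)]
      have hpos : 0 < ∫ x in (0:ℝ)..1, (c 2 n x)^2 :=
        integral_sq_pos _ _ (fun x hx => (hc 2 h2m n x hx).1) (hcne n)
      rw [diag2 q (lam 2 n) (c 2 n) (c' 2 n) (c'' 2 n) (s 2 n) (s' 2 n) (s'' 2 n)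
        (hc 2 h2m n) (hs 2 h2m n) (hceq 2 h2m n) (hseq 2 h2m n) hpos]
      rw [(hsval 2 h2m n).1, (hsval 2 h2m n).2, (hcval 2 h2m n).1, (hcval 2 h2m n).2,
        Real.sin_sub]
      ring
    · rw [if_neg (fun h => hnm h.2)]
      have hlam : lam 2 n ≠ lam 2 m := fun h => hnm (hinj2 h)
      apply off q (lam 2 n) (lam 2 m) _ hlam (c 2 n) (c' 2 n) (c'' 2 n)
        (s 2 n) (s' 2 n) (s'' 2 n) (c 2 m) (c' 2 m) (c'' 2 m)
        (hc 2 h2m n) (hs 2 h2m n) (hc 2 h2m m)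
        (hceq 2 h2m n) (hseq 2 h2m n) (hceq 2 h2m m)
      · apply mul_eq_zero.2 (Or.inl _)
        rw [(hcval 2 h2m n).1, (hcval 2 h2m n).2, (hcval 2 h2m m).1, (hcval 2 h2m m).2]
        ring
      · exact mul_eq_zero.2 (Or.inl (det_zero hcossin (hcbc n) (hcbc m)))
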